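/- Fix n ≥ 2 and w_1,…,w_n ≥ 2. If a behavior P in the scenario [(2 2),(w_1…w_n)] is nonnegative, normalized, no-signalling, and satisfies all lifted CHSH inequalities, then P is local. -/

import Mathlib

/-!
Bell scenario [(2 2),(w_1…w_n)]: party A has two measurements `x : Fin 2`, each with
outcomes `a : Fin 2` (the paper's labels "1","2" are the indices `0`,`1`), and party B
has `n` measurements `y : Fin n`, measurement `y` having outcomes `b : Fin (w y)`
(the paper's label `j ∈ {1,…,w_y}` is the index `j-1`).  A behavior is
`P : Fin 2 → (y : Fin n) → Fin 2 → Fin (w y) → ℝ`, with `P x y a b = P(ab|xy)`.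
-/

/-- The behavior `P` is nonnegative. -/
def Nonneg22 {n : ℕ} {w : Fin n → ℕ}
    (P : Fin 2 → (y : Fin n) → Fin 2 → Fin (w y) → ℝ) : Prop :=
  ∀ x y a b, 0 ≤ P x y a b

/-- The behavior `P` is normalized. -/
def Normalized22 {n : ℕ} {w : Fin n → ℕ}
    (P : Fin 2 → (y : Fin n) → Fin 2 → Fin (w y) → ℝ) : Prop :=
  ∀ x y, (∑ a, ∑ b, P x y a b) = 1

/-- The behavior `P` is no-signalling: A's marginals do not depend on `y` and B's
marginals do not depend on `x`. -/
def NoSignalling22 {n : ℕ} {w : Fin n → ℕ}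
    (P : Fin 2 → (y : Fin n) → Fin 2 → Fin (w y) → ℝ) : Prop :=
  (∀ (x : Fin 2) (a : Fin 2) (y y' : Fin n), (∑ b, P x y a b) = (∑ b, P x y' a b)) ∧
  (∀ (y : Fin n) (b : Fin (w y)) (x x' : Fin 2), (∑ a, P x y a b) = (∑ a, P x' y a b))

/-- `P` is a convex combination of deterministic behaviors, i.e. it is local. -/
def IsLocal22 {n : ℕ} {w : Fin n → ℕ}
    (P : Fin 2 → (y : Fin n) → Fin 2 → Fin (w y) → ℝ) : Prop :=
  ∃ q : (Fin 2 → Fin 2) → ((y : Fin n) → Fin (w y)) → ℝ,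
    (∀ α β, 0 ≤ q α β) ∧
    (∑ α, ∑ β, q α β) = 1 ∧
    (∀ (x : Fin 2) (y : Fin n) (a : Fin 2) (b : Fin (w y)),
      P x y a b = ∑ α, ∑ β,
        q α β * (if α x = a then 1 else 0) * (if β y = b then 1 else 0))

/-- `P_A(a|x)`, A's marginal probability of outcome `a` for measurement `x`,
computed using B's measurement `y` (independent of `y` for no-signalling behaviors). -/
noncomputable def PAm {n : ℕ} {w : Fin n → ℕ}
    (P : Fin 2 → (y : Fin n) → Fin 2 → Fin (w y) → ℝ) (a x : Fin 2) (y : Fin n) : ℝ :=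
  ∑ b, P x y a b

/-- `P_B(G|y) = Σ_{b∈G} P_B(b|y)`, computed using A's measurement `x = 0`
(independent of `x` for no-signalling behaviors). -/
noncomputable def PBm {n : ℕ} {w : Fin n → ℕ}
    (P : Fin 2 → (y : Fin n) → Fin 2 → Fin (w y) → ℝ) (y : Fin n)
    (G : Finset (Fin (w y))) : ℝ :=
  ∑ b ∈ G, ∑ a, P 0 y a b

/-- `P(aG|xy) = Σ_{b∈G} P(ab|xy)`. -/
noncomputable def PaG {n : ℕ} {w : Fin n → ℕ}
    (P : Fin 2 → (y : Fin n) → Fin 2 → Fin (w y) → ℝ) (a x : Fin 2) (y : Fin n)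
    (G : Finset (Fin (w y))) : ℝ :=
  ∑ b ∈ G, P x y a b

/-- `P` satisfies all lifted CHSH inequalities: for every ordered pair of distinct
measurements `y ≠ y'` of B and all nonempty `G ⊆ {1,…,w_y−1}`, `G' ⊆ {1,…,w_{y'}−1}`
(i.e. avoiding the last outcome),
`0 ≤ P_A(1|1) + P_B(G|y) − P(1G|1y) − P(1G|2y) − P(1G′|1y′) + P(1G′|2y′) ≤ 1` and
`0 ≤ P_A(1|2) + P_B(G|y) − P(1G|1y) − P(1G|2y) + P(1G′|1y′) − P(1G′|2y′) ≤ 1`. -/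
def LiftedCHSH {n : ℕ} {w : Fin n → ℕ}
    (P : Fin 2 → (y : Fin n) → Fin 2 → Fin (w y) → ℝ) : Prop :=
  ∀ (y y' : Fin n), y ≠ y' →
  ∀ (G : Finset (Fin (w y))) (G' : Finset (Fin (w y'))),
    G.Nonempty → G'.Nonempty →
    (∀ j ∈ G, (j : ℕ) + 1 < w y) → (∀ j ∈ G', (j : ℕ) + 1 < w y') →
    (0 ≤ PAm P 0 0 y + PBm P y G - PaG P 0 0 y G - PaG P 0 1 y G
          - PaG P 0 0 y' G' + PaG P 0 1 y' G' ∧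
     PAm P 0 0 y + PBm P y G - PaG P 0 0 y G - PaG P 0 1 y G
          - PaG P 0 0 y' G' + PaG P 0 1 y' G' ≤ 1) ∧
    (0 ≤ PAm P 0 1 y + PBm P y G - PaG P 0 0 y G - PaG P 0 1 y G
          + PaG P 0 0 y' G' - PaG P 0 1 y' G' ∧
     PAm P 0 1 y + PBm P y G - PaG P 0 0 y G - PaG P 0 1 y G
          + PaG P 0 0 y' G' - PaG P 0 1 y' G' ≤ 1)

section AuxCHSH
open Finset

/-- A-marginal of outcome 0 for first measurement. -/

noncomputable def Fv {n : ℕ} {w : Fin n → ℕ}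
    (P : Fin 2 → (y : Fin n) → Fin 2 → Fin (w y) → ℝ) (y : Fin n) : ℝ := ∑ b, P 0 y 0 b

/-- A-marginal of outcome 0 for second measurement. -/

noncomputable def Vv {n : ℕ} {w : Fin n → ℕ}
    (P : Fin 2 → (y : Fin n) → Fin 2 → Fin (w y) → ℝ) (y : Fin n) : ℝ := ∑ b, P 1 y 0 b

def Dt {n : ℕ} {w : Fin n → ℕ}
    (P : Fin 2 → (y : Fin n) → Fin 2 → Fin (w y) → ℝ) (y : Fin n) (b : Fin (w y)) : ℝ :=
  P 0 y 1 b - P 1 y 0 b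

def Et {n : ℕ} {w : Fin n → ℕ}
    (P : Fin 2 → (y : Fin n) → Fin 2 → Fin (w y) → ℝ) (y : Fin n) (b : Fin (w y)) : ℝ :=
  P 0 y 0 b - P 1 y 0 b

lemma keyIneq {n : ℕ} {w : Fin n → ℕ} (hw : ∀ y, 2 ≤ w y)
    (P : Fin 2 → (y : Fin n) → Fin 2 → Fin (w y) → ℝ)
    (hpos : Nonneg22 P) (hnorm : Normalized22 P) (hns : NoSignalling22 P)
    (hchsh : LiftedCHSH P) (y y' : Fin n) (hne : y ≠ y')
    (G : Finset (Fin (w y))) (S : Finset (Fin (w y'))) :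
    0 ≤ Vv P y' + (∑ b ∈ G, Dt P y b) + (∑ b ∈ S, Et P y' b) := by
  classical
  have hb : ∀ (z : Fin n) (b : Fin (w z)), P 0 z 0 b + P 0 z 1 b = P 1 z 0 b + P 1 z 1 b := by
    intro z b; have := hns.2 z b 0 1; simpa [Fin.sum_univ_two] using this
  have hnormx : ∀ (x : Fin 2) (z : Fin n), (∑ b, P x z 0 b) + (∑ b, P x z 1 b) = 1 := by
    intro x z; have := hnorm x z; simpa [Fin.sum_univ_two] using this
  have hFz : Fv P y = Fv P y' := hns.1 0 0 y y'
  have hVz : Vv P y = Vv P y' := hns.1 1 0 y y'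
  have hu1 : ∀ z : Fin n, (∑ b, P 0 z 1 b) = 1 - Fv P z := by
    intro z; have := hnormx 0 z; unfold Fv; linarith
  have hv1 : ∀ z : Fin n, (∑ b, P 1 z 1 b) = 1 - Vv P z := by
    intro z
    have h1 := hnormx 1 z
    have h2 : (∑ b, P 1 z 0 b) = Vv P z := rfl
    linarith
  have hDtot : ∀ z : Fin n, (∑ b, Dt P z b) = 1 - Fv P z - Vv P z := by
    intro z; unfold Dt; rw [Finset.sum_sub_distrib, hu1 z]
    have h2 : (∑ b, P 1 z 0 b) = Vv P z := rfl
    linarith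
  have hEtot : ∀ z : Fin n, (∑ b, Et P z b) = Fv P z - Vv P z := by
    intro z; unfold Et; rw [Finset.sum_sub_distrib]; rfl
  -- generic sum comparison helpers
  have hsumle : ∀ (z : Fin n) (T : Finset (Fin (w z))) (c d : Fin (w z) → ℝ),
      (∀ b, c b ≤ d b) → (∀ b, 0 ≤ d b) → (∑ b ∈ T, c b) ≤ ∑ b, d b := by
    intro z T c d h1 h2
    exact le_trans (Finset.sum_le_sum fun b _ => h1 b)
      (Finset.sum_le_sum_of_subset_of_nonneg (Finset.subset_univ T) fun b _ _ => h2 b)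
  have hsumge : ∀ (z : Fin n) (T : Finset (Fin (w z))) (c d : Fin (w z) → ℝ),
      (∀ b, -(d b) ≤ c b) → (∀ b, 0 ≤ d b) → -(∑ b, d b) ≤ ∑ b ∈ T, c b := by
    intro z T c d h1 h2
    have := hsumle z T (fun b => -(c b)) d (fun b => by have := h1 b; linarith) h2
    rw [Finset.sum_neg_distrib] at this
    linarith
  -- the eight elementary bounds
  have eSv : ∀ (z : Fin n) (T : Finset (Fin (w z))), -(Vv P z) ≤ ∑ b ∈ T, Et P z b := by
    intro z T
    exact hsumge z T (fun b => Et P z b) (fun b => P 1 z 0 b) (fun b => by dsimp only [Et]; linarith [hpos 0 z 0 b])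
      (fun b => hpos 1 z 0 b)
  have eSu : ∀ (z : Fin n) (T : Finset (Fin (w z))), (∑ b ∈ T, Et P z b) ≤ Fv P z := by
    intro z T
    exact hsumle z T (fun b => Et P z b) (fun b => P 0 z 0 b) (fun b => by dsimp only [Et]; linarith [hpos 1 z 0 b])
      (fun b => hpos 0 z 0 b)
  have eSu1 : ∀ (z : Fin n) (T : Finset (Fin (w z))), -(1 - Fv P z) ≤ ∑ b ∈ T, Et P z b := by
    intro z T
    have := hsumge z T (fun b => Et P z b) (fun b => P 0 z 1 b)
      (fun b => by dsimp only [Et]; linarith [hb z b, hpos 1 z 1 b]) (fun b => hpos 0 z 1 b)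
    rw [hu1 z] at this; exact this
  have eSv1 : ∀ (z : Fin n) (T : Finset (Fin (w z))), (∑ b ∈ T, Et P z b) ≤ 1 - Vv P z := by
    intro z T
    have := hsumle z T (fun b => Et P z b) (fun b => P 1 z 1 b)
      (fun b => by dsimp only [Et]; linarith [hb z b, hpos 0 z 1 b]) (fun b => hpos 1 z 1 b)
    rw [hv1 z] at this; exact this
  have eDv : ∀ (z : Fin n) (T : Finset (Fin (w z))), -(Vv P z) ≤ ∑ b ∈ T, Dt P z b := by
    intro z T
    exact hsumge z T (fun b => Dt P z b) (fun b => P 1 z 0 b) (fun b => by dsimp only [Dt]; linarith [hpos 0 z 1 b])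
      (fun b => hpos 1 z 0 b)
  have eDu : ∀ (z : Fin n) (T : Finset (Fin (w z))), -(Fv P z) ≤ ∑ b ∈ T, Dt P z b := by
    intro z T
    exact hsumge z T (fun b => Dt P z b) (fun b => P 0 z 0 b)
      (fun b => by dsimp only [Dt]; linarith [hb z b, hpos 1 z 1 b]) (fun b => hpos 0 z 0 b)
  have eDu1 : ∀ (z : Fin n) (T : Finset (Fin (w z))), (∑ b ∈ T, Dt P z b) ≤ 1 - Fv P z := by
    intro z T
    have := hsumle z T (fun b => Dt P z b) (fun b => P 0 z 1 b)
      (fun b => by dsimp only [Dt]; linarith [hpos 1 z 0 b]) (fun b => hpos 0 z 1 b)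
    rw [hu1 z] at this; exact this
  have eDv1 : ∀ (z : Fin n) (T : Finset (Fin (w z))), (∑ b ∈ T, Dt P z b) ≤ 1 - Vv P z := by
    intro z T
    have := hsumle z T (fun b => Dt P z b) (fun b => P 1 z 1 b)
      (fun b => by dsimp only [Dt]; linarith [hb z b, hpos 0 z 0 b]) (fun b => hpos 1 z 1 b)
    rw [hv1 z] at this; exact this
  -- CHSH in D/E form
  have hconv1 : ∀ (T : Finset (Fin (w y))),
      PBm P y T - PaG P 0 0 y T - PaG P 0 1 y T = ∑ b ∈ T, Dt P y b := by
    intro T; unfold PBm PaG Dt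
    rw [← Finset.sum_sub_distrib, ← Finset.sum_sub_distrib]
    exact Finset.sum_congr rfl fun b _ => by rw [Fin.sum_univ_two]; ring
  have hconv2 : ∀ (z : Fin n) (T : Finset (Fin (w z))),
      PaG P 0 0 z T - PaG P 0 1 z T = ∑ b ∈ T, Et P z b := by
    intro z T; unfold PaG Et
    rw [← Finset.sum_sub_distrib]
  have hPA0 : PAm P 0 0 y = Fv P y := rfl
  have hPA1 : PAm P 0 1 y = Vv P y := rfl
  have hCHSH : ∀ (T : Finset (Fin (w y))) (T' : Finset (Fin (w y'))),
      T.Nonempty → T'.Nonempty →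
      (∀ j ∈ T, (j : ℕ) + 1 < w y) → (∀ j ∈ T', (j : ℕ) + 1 < w y') →
      (0 ≤ Fv P y + (∑ b ∈ T, Dt P y b) - (∑ b ∈ T', Et P y' b) ∧
       Fv P y + (∑ b ∈ T, Dt P y b) - (∑ b ∈ T', Et P y' b) ≤ 1) ∧
      (0 ≤ Vv P y + (∑ b ∈ T, Dt P y b) + (∑ b ∈ T', Et P y' b) ∧
       Vv P y + (∑ b ∈ T, Dt P y b) + (∑ b ∈ T', Et P y' b) ≤ 1) := by
    intro T T' h1 h2 h3 h4
    obtain ⟨⟨a1, a2⟩, b1, b2⟩ := hchsh y y' hne T T' h1 h2 h3 h4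
    have c1 := hconv1 T
    have c2 := hconv2 y' T'
    rw [hPA0] at a1 a2
    rw [hPA1] at b1 b2
    constructor <;> constructor <;> linarith
  -- last outcomes
  have hlt : ∀ (z : Fin n) (T : Finset (Fin (w z))),
      (⟨w z - 1, by have := hw z; omega⟩ : Fin (w z)) ∉ T → ∀ j ∈ T, (j : ℕ) + 1 < w z := by
    intro z T h j hj
    have h2 := j.isLt
    have h3 : j ≠ ⟨w z - 1, by have := hw z; omega⟩ := fun he => h (he ▸ hj)
    rw [Fin.ne_iff_vne] at h3
    simp only [Fin.val_mk] at h3 ⊢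
    omega
  set lasty : Fin (w y) := ⟨w y - 1, by have := hw y; omega⟩ with hlasty
  set lasty' : Fin (w y') := ⟨w y' - 1, by have := hw y'; omega⟩ with hlasty'
  have hGcompl : (∑ b ∈ Gᶜ, Dt P y b) + (∑ b ∈ G, Dt P y b) = 1 - Fv P y - Vv P y := by
    rw [Finset.sum_compl_add_sum]; exact hDtot y
  have hScompl : (∑ b ∈ Sᶜ, Et P y' b) + (∑ b ∈ S, Et P y' b) = Fv P y' - Vv P y' := by
    rw [Finset.sum_compl_add_sum]; exact hEtot y'
  by_cases hG : lasty ∈ G <;> by_cases hS : lasty' ∈ S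
  · -- both contain last : use (B)hi on complements
    rcases Finset.eq_empty_or_nonempty Gᶜ with hGe | hGne
    · rw [hGe, Finset.sum_empty] at hGcompl
      have := eSv1 y' Sᶜ
      linarith
    rcases Finset.eq_empty_or_nonempty Sᶜ with hSe | hSne
    · rw [hSe, Finset.sum_empty] at hScompl
      have := eDv1 y Gᶜ
      linarith
    · have := ((hCHSH Gᶜ Sᶜ hGne hSne (hlt y Gᶜ (by simpa using hG))
        (hlt y' Sᶜ (by simpa using hS))).2).2
      linarith
  · -- last ∈ G only : use (A)hi on (Gᶜ, S)
    rcases Finset.eq_empty_or_nonempty Gᶜ with hGe | hGne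
    · rw [hGe, Finset.sum_empty] at hGcompl
      have := eSu1 y' S
      linarith
    rcases Finset.eq_empty_or_nonempty S with hSe | hSne
    · rw [hSe, Finset.sum_empty]
      have := eDu1 y Gᶜ
      linarith
    · have := ((hCHSH Gᶜ S hGne hSne (hlt y Gᶜ (by simpa using hG))
        (hlt y' S hS)).1).2
      linarith
  · -- last ∈ S only : use (A)lo on (G, Sᶜ)
    rcases Finset.eq_empty_or_nonempty G with hGe | hGne
    · rw [hGe, Finset.sum_empty]
      have := eSu y' Sᶜ
      linarith
    rcases Finset.eq_empty_or_nonempty Sᶜ with hSe | hSne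
    · rw [hSe, Finset.sum_empty] at hScompl
      have := eDu y G
      linarith
    · have := ((hCHSH G Sᶜ hGne hSne (hlt y G hG)
        (hlt y' Sᶜ (by simpa using hS))).1).1
      linarith
  · -- neither contains last : use (B)lo on (G,S)
    rcases Finset.eq_empty_or_nonempty G with hGe | hGne
    · rw [hGe, Finset.sum_empty]
      have := eSv y' S
      linarith
    rcases Finset.eq_empty_or_nonempty S with hSe | hSne
    · rw [hSe, Finset.sum_empty]
      have := eDv y G
      linarith
    · have := ((hCHSH G S hGne hSne (hlt y G hG) (hlt y' S hS)).2).1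
      linarith

noncomputable def loF {n : ℕ} {w : Fin n → ℕ}
    (P : Fin 2 → (y : Fin n) → Fin 2 → Fin (w y) → ℝ) (y : Fin n) (b : Fin (w y)) : ℝ :=
  max 0 (-(Dt P y b))

noncomputable def hiF {n : ℕ} {w : Fin n → ℕ}
    (P : Fin 2 → (y : Fin n) → Fin 2 → Fin (w y) → ℝ) (y : Fin n) (b : Fin (w y)) : ℝ :=
  min (P 0 y 0 b) (P 1 y 0 b)

noncomputable def LF {n : ℕ} {w : Fin n → ℕ}
    (P : Fin 2 → (y : Fin n) → Fin 2 → Fin (w y) → ℝ) (y : Fin n) : ℝ := ∑ b, loF P y b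

noncomputable def UF {n : ℕ} {w : Fin n → ℕ}
    (P : Fin 2 → (y : Fin n) → Fin 2 → Fin (w y) → ℝ) (y : Fin n) : ℝ := ∑ b, hiF P y b

lemma maxif (x : ℝ) : max 0 x = if 0 < x then x else 0 := by
  rcases lt_or_ge 0 x with h | h
  · rw [if_pos h, max_eq_right h.le]
  · rw [if_neg (not_lt.mpr h), max_eq_left h]

lemma lo_le_hi {n : ℕ} {w : Fin n → ℕ}
    (P : Fin 2 → (y : Fin n) → Fin 2 → Fin (w y) → ℝ)
    (hpos : Nonneg22 P) (hns : NoSignalling22 P) (y : Fin n) (b : Fin (w y)) :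
    loF P y b ≤ hiF P y b := by
  have hb : P 0 y 0 b + P 0 y 1 b = P 1 y 0 b + P 1 y 1 b := by
    have := hns.2 y b 0 1; simpa [Fin.sum_univ_two] using this
  have h1 := hpos 0 y 0 b
  have h2 := hpos 1 y 0 b
  have h3 := hpos 0 y 1 b
  have h4 := hpos 1 y 1 b
  apply max_le (le_min h1 h2)
  apply le_min <;> ( dsimp only [Dt] ; linarith )

lemma LleU {n : ℕ} {w : Fin n → ℕ} (hw : ∀ y, 2 ≤ w y)
    (P : Fin 2 → (y : Fin n) → Fin 2 → Fin (w y) → ℝ)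
    (hpos : Nonneg22 P) (hnorm : Normalized22 P) (hns : NoSignalling22 P)
    (hchsh : LiftedCHSH P) (y y' : Fin n) : LF P y ≤ UF P y' := by
  classical
  by_cases hyy : y = y'
  · subst hyy
    exact Finset.sum_le_sum fun b _ => lo_le_hi P hpos hns y b
  · have hL : LF P y = ∑ b ∈ Finset.univ.filter (fun b => 0 < -(Dt P y b)), (-(Dt P y b)) := by
      rw [Finset.sum_filter]
      exact Finset.sum_congr rfl fun b _ => maxif _
    have hhi : ∀ b, hiF P y' b = P 1 y' 0 b - max 0 (-(Et P y' b)) := by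
      intro b; unfold hiF Et
      rcases le_total (P 0 y' 0 b) (P 1 y' 0 b) with h | h
      · rw [min_eq_left h, max_eq_right (by linarith)]; ring
      · rw [min_eq_right h, max_eq_left (by linarith)]; ring
    have hU : UF P y' = Vv P y'
        - ∑ b ∈ Finset.univ.filter (fun b => 0 < -(Et P y' b)), (-(Et P y' b)) := by
      unfold UF Vv
      rw [Finset.sum_congr rfl fun b _ => hhi b, Finset.sum_sub_distrib]
      congr 1
      rw [Finset.sum_filter]
      exact Finset.sum_congr rfl fun b _ => maxif _
    have key := keyIneq hw P hpos hnorm hns hchsh y y' hyy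
      (Finset.univ.filter (fun b => 0 < -(Dt P y b)))
      (Finset.univ.filter (fun b => 0 < -(Et P y' b)))
    rw [hL, hU]
    have e1 : ∑ b ∈ Finset.univ.filter (fun b => 0 < -(Dt P y b)), (-(Dt P y b))
        = -(∑ b ∈ Finset.univ.filter (fun b => 0 < -(Dt P y b)), Dt P y b) :=
      Finset.sum_neg_distrib _
    have e2 : ∑ b ∈ Finset.univ.filter (fun b => 0 < -(Et P y' b)), (-(Et P y' b))
        = -(∑ b ∈ Finset.univ.filter (fun b => 0 < -(Et P y' b)), Et P y' b) :=
      Finset.sum_neg_distrib _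
    rw [e1, e2]
    linarith

lemma sum_pi_prod' {n : ℕ} {w : Fin n → ℕ} (p : ∀ z, Fin (w z) → ℝ) :
    ∑ β : (∀ z, Fin (w z)), ∏ z, p z (β z) = ∏ z, ∑ c, p z c := by
  rw [Finset.prod_univ_sum, Fintype.piFinset_univ]

lemma sum_pi_extract' {n : ℕ} {w : Fin n → ℕ} (p : ∀ z, Fin (w z) → ℝ)
    (hp : ∀ z, ∑ c, p z c = 1) (y : Fin n) (b : Fin (w y)) :
    ∑ β : (∀ z, Fin (w z)), (∏ z, p z (β z)) * (if β y = b then 1 else 0) = p y b := by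
  classical
  set d : ∀ z, Fin (w z) → ℝ :=
    fun z c => if z = y then (if (c : ℕ) = (b : ℕ) then 1 else 0) else 1 with hd
  have step1 : ∀ β : (∀ z, Fin (w z)), (if β y = b then (1:ℝ) else 0) = ∏ z, d z (β z) := by
    intro β
    rw [Finset.prod_eq_single_of_mem y (mem_univ y)]
    · simp [hd, Fin.val_inj]
    · intro z _ hz; simp [hd, hz]
  have step2 : ∀ z, ∑ c, p z c * d z c = if z = y then p y b else 1 := by
    intro z
    by_cases hz : z = y
    · subst hz
      simp only [hd, if_pos rfl, Fin.val_inj, mul_ite, mul_one, mul_zero]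
      rw [Finset.sum_ite_eq' univ b (fun c => p z c)]
      simp
    · simp only [hd, if_neg hz, mul_one, hp z]
  calc ∑ β : (∀ z, Fin (w z)), (∏ z, p z (β z)) * (if β y = b then 1 else 0)
      = ∑ β : (∀ z, Fin (w z)), ∏ z, (p z (β z) * d z (β z)) := by
        refine Finset.sum_congr rfl fun β _ => ?_
        rw [step1 β, ← Finset.prod_mul_distrib]
    _ = ∏ z, ∑ c, p z c * d z c := sum_pi_prod' (fun z c => p z c * d z c)
    _ = p y b := by
        rw [Finset.prod_congr rfl fun z _ => step2 z,
          Finset.prod_ite_eq' univ y (fun _ => p y b)]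
        simp

lemma sum_fn_fin2 (g : (Fin 2 → Fin 2) → ℝ) :
    ∑ α, g α = g ![0,0] + g ![0,1] + g ![1,0] + g ![1,1] := by
  have e : ∀ a b : Fin 2, (piFinTwoEquiv fun _ => Fin 2).symm (a, b) = ![a, b] := by
    intro a b; funext i; fin_cases i <;> simp [piFinTwoEquiv]
  rw [← (piFinTwoEquiv (fun _ => Fin 2)).symm.sum_comp g, Fintype.sum_prod_type]
  simp only [Fin.sum_univ_two, e]
  ring

lemma build_local {n : ℕ} (hn : 0 < n) {w : Fin n → ℕ} (hw : ∀ y, 0 < w y)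
    (P : Fin 2 → (y : Fin n) → Fin 2 → Fin (w y) → ℝ)
    (Q : (Fin 2 → Fin 2) → ∀ y, Fin (w y) → ℝ) (r : (Fin 2 → Fin 2) → ℝ)
    (hQ0 : ∀ α y b, 0 ≤ Q α y b)
    (hrQ : ∀ α y, ∑ b, Q α y b = r α)
    (hrsum : ∑ α, r α = 1)
    (hP : ∀ (x : Fin 2) (y : Fin n) (a : Fin 2) (b : Fin (w y)),
      P x y a b = ∑ α, (if α x = a then 1 else 0) * Q α y b) :
    IsLocal22 P := by
  classical
  set p : (Fin 2 → Fin 2) → ∀ z, Fin (w z) → ℝ :=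
    fun α z c => if r α = 0 then (if c = ⟨0, hw z⟩ then 1 else 0) else Q α z c / r α with hp
  have hr0 : ∀ α, 0 ≤ r α := by
    intro α
    rw [← hrQ α ⟨0, hn⟩]
    exact Finset.sum_nonneg fun b _ => hQ0 _ _ _
  have hQzero : ∀ α, r α = 0 → ∀ z c, Q α z c = 0 := by
    intro α h z c
    have := (Finset.sum_eq_zero_iff_of_nonneg (fun b _ => hQ0 α z b)).mp (by rw [hrQ α z, h])
    exact this c (mem_univ c)
  have hp0 : ∀ α z c, 0 ≤ p α z c := by
    intro α z c
    by_cases h : r α = 0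
    · simp only [hp, if_pos h]; split <;> norm_num
    · simp only [hp, if_neg h]
      exact div_nonneg (hQ0 _ _ _) (hr0 α)
  have hpsum : ∀ α z, ∑ c, p α z c = 1 := by
    intro α z
    by_cases h : r α = 0
    · simp only [hp, if_pos h]
      rw [Finset.sum_ite_eq' univ (⟨0, hw z⟩ : Fin (w z)) (fun _ => (1:ℝ))]
      simp
    · simp only [hp, if_neg h]
      rw [← Finset.sum_div, hrQ α z, div_self h]
  have hrp : ∀ α z c, r α * p α z c = Q α z c := by
    intro α z c
    by_cases h : r α = 0
    · rw [h, hQzero α h z c, zero_mul]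
    · simp only [hp, if_neg h]; field_simp
  refine ⟨fun α β => r α * ∏ z, p α z (β z), fun α β => mul_nonneg (hr0 α)
    (Finset.prod_nonneg fun z _ => hp0 α z (β z)), ?_, ?_⟩
  · rw [← hrsum]
    refine Finset.sum_congr rfl fun α _ => ?_
    rw [← Finset.mul_sum, sum_pi_prod' (p α)]
    rw [Finset.prod_congr rfl fun z _ => hpsum α z]
    simp
  · intro x y a b
    rw [hP x y a b]
    refine Finset.sum_congr rfl fun α _ => ?_
    have : ∀ β : ∀ z, Fin (w z),
        r α * (∏ z, p α z (β z)) * (if α x = a then 1 else 0) * (if β y = b then 1 else 0)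
        = ((if α x = a then 1 else 0) * r α) *
          ((∏ z, p α z (β z)) * (if β y = b then 1 else 0)) := by
      intro β; ring
    rw [Finset.sum_congr rfl fun β _ => this β, ← Finset.mul_sum,
      sum_pi_extract' (p α) (hpsum α) y b, mul_assoc, hrp α y b]

noncomputable def lamF {n : ℕ} {w : Fin n → ℕ}
    (P : Fin 2 → (y : Fin n) → Fin 2 → Fin (w y) → ℝ) (s : ℝ) (y : Fin n) : ℝ :=
  if UF P y = LF P y then 0 else (s - LF P y) / (UF P y - LF P y)

noncomputable def tF {n : ℕ} {w : Fin n → ℕ}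
    (P : Fin 2 → (y : Fin n) → Fin 2 → Fin (w y) → ℝ) (s : ℝ) (y : Fin n) (b : Fin (w y)) : ℝ :=
  loF P y b + lamF P s y * (hiF P y b - loF P y b)

noncomputable def QF {n : ℕ} {w : Fin n → ℕ}
    (P : Fin 2 → (y : Fin n) → Fin 2 → Fin (w y) → ℝ) (s : ℝ)
    (α : Fin 2 → Fin 2) (y : Fin n) (b : Fin (w y)) : ℝ :=
  if α 0 = 0 then (if α 1 = 0 then tF P s y b else P 0 y 0 b - tF P s y b)
  else (if α 1 = 0 then P 1 y 0 b - tF P s y b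
        else P 0 y 1 b - P 1 y 0 b + tF P s y b)

noncomputable def rF {n : ℕ} {w : Fin n → ℕ}
    (P : Fin 2 → (y : Fin n) → Fin 2 → Fin (w y) → ℝ) (s : ℝ) (y₀ : Fin n)
    (α : Fin 2 → Fin 2) : ℝ :=
  if α 0 = 0 then (if α 1 = 0 then s else Fv P y₀ - s)
  else (if α 1 = 0 then Vv P y₀ - s else 1 - Fv P y₀ - Vv P y₀ + s)

theorem CHSH_implies_local_aux
    (n : ℕ) (hn : 2 ≤ n) (w : Fin n → ℕ) (hw : ∀ y, 2 ≤ w y)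
    (P : Fin 2 → (y : Fin n) → Fin 2 → Fin (w y) → ℝ)
    (hpos : Nonneg22 P) (hnorm : Normalized22 P) (hns : NoSignalling22 P)
    (hchsh : LiftedCHSH P) :
    IsLocal22 P := by
  classical
  have hn0 : 0 < n := by omega
  have hw0 : ∀ y, 0 < w y := fun y => by have := hw y; omega
  set y₀ : Fin n := ⟨0, hn0⟩ with hy₀
  set s : ℝ := Finset.univ.sup' ⟨y₀, Finset.mem_univ y₀⟩ (LF P) with hs
  have hLs : ∀ y, LF P y ≤ s := fun y => Finset.le_sup' (LF P) (Finset.mem_univ y)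
  have hsU : ∀ y, s ≤ UF P y := fun y =>
    Finset.sup'_le _ _ (fun z _ => LleU hw P hpos hnorm hns hchsh z y)
  have hb : ∀ (z : Fin n) (b : Fin (w z)), P 0 z 0 b + P 0 z 1 b = P 1 z 0 b + P 1 z 1 b := by
    intro z b; have := hns.2 z b 0 1; simpa [Fin.sum_univ_two] using this
  have hnormx : ∀ (x : Fin 2) (z : Fin n), (∑ b, P x z 0 b) + (∑ b, P x z 1 b) = 1 := by
    intro x z; have := hnorm x z; simpa [Fin.sum_univ_two] using this
  have hlam0 : ∀ y, 0 ≤ lamF P s y := by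
    intro y; unfold lamF; split
    · exact le_refl 0
    · exact div_nonneg (by linarith [hLs y]) (by linarith [LleU hw P hpos hnorm hns hchsh y y])
  have hlam1 : ∀ y, lamF P s y ≤ 1 := by
    intro y; unfold lamF; split
    · norm_num
    · rename_i h
      rw [div_le_one (by have := LleU hw P hpos hnorm hns hchsh y y; cases lt_or_eq_of_le this with
        | inl h2 => linarith
        | inr h2 => exact absurd h2.symm h)]
      linarith [hsU y]
  have ht1 : ∀ y b, loF P y b ≤ tF P s y b := by
    intro y b
    have := mul_nonneg (hlam0 y) (sub_nonneg.mpr (lo_le_hi P hpos hns y b))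
    unfold tF; linarith
  have ht2 : ∀ y b, tF P s y b ≤ hiF P y b := by
    intro y b
    have h2 := lo_le_hi P hpos hns y b
    have := mul_le_mul_of_nonneg_right (hlam1 y) (sub_nonneg.mpr h2)
    unfold tF; linarith
  have htsum : ∀ y, (∑ b, tF P s y b) = s := by
    intro y
    have hsum : (∑ b, tF P s y b) = LF P y + lamF P s y * (UF P y - LF P y) := by
      unfold tF
      rw [Finset.sum_add_distrib, ← Finset.mul_sum, Finset.sum_sub_distrib]
      rfl
    rw [hsum]; unfold lamF; split
    · rename_i h
      have h1 := hLs y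
      have h2 := hsU y
      rw [h] at h2
      simp
      linarith
    · rename_i h
      rw [div_mul_cancel₀ _ (sub_ne_zero.mpr h)]; ring
  have hQ0 : ∀ α y b, 0 ≤ QF P s α y b := by
    intro α y b
    have e1 := ht1 y b
    have e2 := ht2 y b
    have e3 : (0:ℝ) ≤ loF P y b := le_max_left 0 _
    have e4 : -(Dt P y b) ≤ loF P y b := le_max_right _ _
    have e5 : hiF P y b ≤ P 0 y 0 b := min_le_left _ _
    have e6 : hiF P y b ≤ P 1 y 0 b := min_le_right _ _
    have hD : Dt P y b = P 0 y 1 b - P 1 y 0 b := rfl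
    have h0 : α 0 = 0 ∨ α 0 = 1 := by omega
    have h1 : α 1 = 0 ∨ α 1 = 1 := by omega
    unfold QF
    rcases h0 with h0 | h0 <;> rcases h1 with h1 | h1 <;> rw [h0, h1] <;> norm_num <;> linarith
  have hFy : ∀ y, (∑ b, P 0 y 0 b) = Fv P y₀ := fun y => hns.1 0 0 y y₀
  have hVy : ∀ y, (∑ b, P 1 y 0 b) = Vv P y₀ := fun y => hns.1 1 0 y y₀
  have hrQ : ∀ α y, (∑ b, QF P s α y b) = rF P s y₀ α := by
    intro α y
    have h0 : α 0 = 0 ∨ α 0 = 1 := by omega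
    have h1 : α 1 = 0 ∨ α 1 = 1 := by omega
    have hx := hnormx 0 y
    have hFy' := hFy y
    have hVy' := hVy y
    unfold QF rF
    rcases h0 with h0 | h0 <;> rcases h1 with h1 | h1 <;> rw [h0, h1] <;> norm_num
    · exact htsum y
    · rw [htsum y]; linarith
    · rw [htsum y]; linarith
    · rw [Finset.sum_add_distrib, Finset.sum_sub_distrib, htsum y]; linarith
  have hrsum : (∑ α, rF P s y₀ α) = 1 := by
    rw [sum_fn_fin2 (rF P s y₀)]
    unfold rF
    norm_num
    ring
  have hPQ : ∀ (x : Fin 2) (y : Fin n) (a : Fin 2) (b : Fin (w y)),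
      P x y a b = ∑ α, (if α x = a then 1 else 0) * QF P s α y b := by
    intro x y a b
    have hbb := hb y b
    rw [sum_fn_fin2 (fun α => (if α x = a then 1 else 0) * QF P s α y b)]
    fin_cases x <;> fin_cases a <;>
      simp only [QF, Matrix.cons_val_zero, Matrix.cons_val_one, Matrix.head_cons] <;>
      norm_num <;> linarith
  exact build_local hn0 hw0 P (QF P s) (rF P s y₀) hQ0 hrQ hrsum hPQ

end AuxCHSH

/-- if a behavior in the scenario [(2 2),(w_1…w_n)] is nonnegative,
normalized, no-signalling and satisfies all lifted CHSH inequalities, then it is local. -/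
theorem CHSH_implies_local
    (n : ℕ) (hn : 2 ≤ n) (w : Fin n → ℕ) (hw : ∀ y, 2 ≤ w y)
    (P : Fin 2 → (y : Fin n) → Fin 2 → Fin (w y) → ℝ)
    (hpos : Nonneg22 P) (hnorm : Normalized22 P) (hns : NoSignalling22 P)
    (hchsh : LiftedCHSH P) :
    IsLocal22 P := by
  exact CHSH_implies_local_aux n hn w hw P hpos hnorm hns hchsh
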